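/- The function σ(X) on the open simplex Δ of positive n×n matrices with entry sum 1 attains its maximum value n^{−n} at the constant matrix with all entries 1/n². -/

import Mathlib

open Finset

/-- On the open simplex `Δ` of positive `n × n` matrices with entry sum 1, the
function `σ(X) = Πᵢ λᵢμᵢ` (from the doubly stochastic scaling decomposition
`x_{ij} = y_{ij} λᵢ μⱼ`) attains its maximum value `n^{-n}` at the constant
matrix with all entries `1/n²`. -/
theorem sigma_max_on_simplex (n : ℕ) (hn : 0 < n) :
    (∀ (X Y : Matrix (Fin n) (Fin n) ℝ) (lam mu : Fin n → ℝ),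
      (∀ i j, 0 < X i j) → (∑ i, ∑ j, X i j = 1) →
      (∀ i, 0 < lam i) → (∀ j, 0 < mu j) →
      (∀ i j, X i j = Y i j * lam i * mu j) →
      (∀ i j, 0 ≤ Y i j) →
      (∀ i, ∑ j, Y i j = 1) → (∀ j, ∑ i, Y i j = 1) →
      ∏ i, lam i * mu i ≤ ((n : ℝ) ^ n)⁻¹) ∧
    (∀ (Y : Matrix (Fin n) (Fin n) ℝ) (lam mu : Fin n → ℝ),
      (∀ i, 0 < lam i) → (∀ j, 0 < mu j) →
      (∀ i j, (1 / (n : ℝ) ^ 2) = Y i j * lam i * mu j) →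
      (∀ i j, 0 ≤ Y i j) →
      (∀ i, ∑ j, Y i j = 1) → (∀ j, ∑ i, Y i j = 1) →
      ∏ i, lam i * mu i = ((n : ℝ) ^ n)⁻¹) := by
  have hn' : (0 : ℝ) < n := Nat.cast_pos.mpr hn
  have hnne : (n : ℝ) ≠ 0 := ne_of_gt hn'
  constructor
  · intro X Y lam mu hX hXsum hlam hmu hdec hY hrow hcol
    set P := ∏ i, lam i * mu i with hP
    have hPpos : 0 < P := Finset.prod_pos fun i _ => mul_pos (hlam i) (hmu i)
    -- apply weighted AM-GM over Fin n × Fin n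
    have hAMGM := Real.geom_mean_le_arith_mean_weighted (Finset.univ : Finset (Fin n × Fin n))
      (fun p => Y p.1 p.2 / n) (fun p => lam p.1 * mu p.2)
      (fun p _ => div_nonneg (hY p.1 p.2) hn'.le)
      (by
        rw [Fintype.sum_prod_type]
        have hx : ∀ x : Fin n, ∑ y, Y x y / (n:ℝ) = 1 / n := fun x => by
          rw [← Finset.sum_div, hrow]
        simp only [hx, Finset.sum_const, Finset.card_univ, Fintype.card_fin, nsmul_eq_mul]
        field_simp)
      (fun p _ => (mul_pos (hlam p.1) (hmu p.2)).le)
    -- RHS equals 1/n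
    have hrhs : ∑ p : Fin n × Fin n, (Y p.1 p.2 / n) * (lam p.1 * mu p.2) = 1 / n := by
      have : ∑ p : Fin n × Fin n, (Y p.1 p.2 / n) * (lam p.1 * mu p.2)
          = (∑ i, ∑ j, X i j) / n := by
        rw [Finset.sum_div, Fintype.sum_prod_type]
        refine Finset.sum_congr rfl fun i _ => ?_
        rw [Finset.sum_div]
        refine Finset.sum_congr rfl fun j _ => ?_
        rw [hdec i j]; ring
      rw [this, hXsum]
    -- LHS equals P ^ (1/n)
    have hlhs : ∏ p : Fin n × Fin n, (lam p.1 * mu p.2) ^ (Y p.1 p.2 / n)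
        = P ^ ((n : ℝ)⁻¹) := by
      have h1 : ∀ i j, (lam i * mu j) ^ (Y i j / n)
          = lam i ^ (Y i j / n) * mu j ^ (Y i j / n) := fun i j =>
        Real.mul_rpow (hlam i).le (hmu j).le
      rw [Fintype.prod_prod_type]
      calc ∏ i, ∏ j, (lam i * mu j) ^ (Y i j / n)
          = ∏ i, ∏ j, lam i ^ (Y i j / n) * mu j ^ (Y i j / n) := by
            exact Finset.prod_congr rfl fun i _ => Finset.prod_congr rfl fun j _ => h1 i j
        _ = (∏ i, ∏ j, lam i ^ (Y i j / n)) * (∏ i, ∏ j, mu j ^ (Y i j / n)) := by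
            rw [← Finset.prod_mul_distrib]
            exact Finset.prod_congr rfl fun i _ => Finset.prod_mul_distrib
        _ = (∏ i, lam i ^ ((n:ℝ)⁻¹)) * (∏ j, mu j ^ ((n:ℝ)⁻¹)) := by
            congr 1
            · refine Finset.prod_congr rfl fun i _ => ?_
              rw [← Real.rpow_sum_of_pos (hlam i), ← Finset.sum_div, hrow i, one_div]
            · rw [Finset.prod_comm]
              refine Finset.prod_congr rfl fun j _ => ?_
              rw [← Real.rpow_sum_of_pos (hmu j), ← Finset.sum_div, hcol j, one_div]
        _ = (∏ i, lam i) ^ ((n:ℝ)⁻¹) * (∏ j, mu j) ^ ((n:ℝ)⁻¹) := by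
            rw [Real.finset_prod_rpow _ _ (fun i _ => (hlam i).le),
              Real.finset_prod_rpow _ _ (fun j _ => (hmu j).le)]
        _ = P ^ ((n:ℝ)⁻¹) := by
            rw [← Real.mul_rpow (Finset.prod_nonneg fun i _ => (hlam i).le)
              (Finset.prod_nonneg fun j _ => (hmu j).le), hP, Finset.prod_mul_distrib]
    have hkey : P ^ ((n:ℝ)⁻¹) ≤ 1 / n := by
      rw [← hlhs, ← hrhs]; exact hAMGM
    -- raise to n-th power
    have := Real.rpow_le_rpow (Real.rpow_nonneg hPpos.le _) hkey hn'.le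
    rwa [← Real.rpow_mul hPpos.le, inv_mul_cancel₀ hnne, Real.rpow_one,
      Real.rpow_natCast, one_div, inv_pow] at this
  · intro Y lam mu hlam hmu hdec hY hrow hcol
    have hYeq : ∀ i j, Y i j = 1 / (n ^ 2 * (lam i * mu j)) := by
      intro i j
      have h := hdec i j
      have := (hlam i).ne'
      have := (hmu j).ne'
      field_simp at h ⊢
      linarith
    set M := ∑ j, (mu j)⁻¹ with hM
    haveI : Nonempty (Fin n) := ⟨⟨0, hn⟩⟩
    have hMpos : 0 < M := Finset.sum_pos (fun j _ => inv_pos.mpr (hmu j)) Finset.univ_nonempty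
    have hlamconst : ∀ i, lam i = M / n ^ 2 := by
      intro i
      have h1 : ∑ j, (1:ℝ) / (n ^ 2 * (lam i * mu j)) = 1 :=
        calc ∑ j, (1:ℝ) / (n ^ 2 * (lam i * mu j)) = ∑ j, Y i j :=
              Finset.sum_congr rfl fun j _ => (hYeq i j).symm
          _ = 1 := hrow i
      have h2 : ∑ j, 1 / ((n:ℝ) ^ 2 * (lam i * mu j))
          = M / (n ^ 2 * lam i) := by
        rw [hM, Finset.sum_div]
        refine Finset.sum_congr rfl fun j _ => ?_
        field_simp
      rw [h2] at h1
      have hli := (hlam i).ne'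
      field_simp at h1 ⊢
      linarith
    set L := ∑ i, (lam i)⁻¹ with hL
    have hmuconst : ∀ j, mu j = L / n ^ 2 := by
      intro j
      have h1 : ∑ i, (1:ℝ) / (n ^ 2 * (lam i * mu j)) = 1 :=
        calc ∑ i, (1:ℝ) / (n ^ 2 * (lam i * mu j)) = ∑ i, Y i j :=
              Finset.sum_congr rfl fun i _ => (hYeq i j).symm
          _ = 1 := hcol j
      have h2 : ∑ i, 1 / ((n:ℝ) ^ 2 * (lam i * mu j))
          = L / (n ^ 2 * mu j) := by
        rw [hL, Finset.sum_div]
        refine Finset.sum_congr rfl fun i _ => ?_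
        field_simp
      rw [h2] at h1
      have hmj := (hmu j).ne'
      field_simp at h1 ⊢
      linarith
    have hLval : L = n * (n ^ 2 / M) := by
      rw [hL]
      have : ∀ i : Fin n, (lam i)⁻¹ = n ^ 2 / M := by
        intro i; rw [hlamconst i]
        rw [inv_div]
      simp [this, Finset.sum_const, mul_comm]
    have hmix : ∀ i : Fin n, lam i * mu i = 1 / n := by
      intro i
      rw [hlamconst i, hmuconst i, hLval]
      field_simp
    calc ∏ i, lam i * mu i = ∏ i : Fin n, (1 / (n:ℝ)) := Finset.prod_congr rfl fun i _ => hmix i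
      _ = ((n:ℝ) ^ n)⁻¹ := by rw [Finset.prod_const, Finset.card_univ, Fintype.card_fin,
        one_div, inv_pow]
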